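/- Let D be a nonempty finite subset of the natural numbers, not equal to {0}, and let ι = gcd{r+2 : r ∈ D}. Let S_D = {(1,−1)} ∪ ⋃_{r∈D} {(−r+i, i) : 0 ≤ i ≤ r} ⊆ ℤ². If there exists a walk of n steps, all steps in S_D, from (0,0) to (i,j), then i − j ≡ 2n (mod ι). -/
import Mathlib

/-- The step set of tandem walks with face-step levels in `D`. -/
def tandemSteps (D : Finset ℕ) : Set (ℤ × ℤ) :=
  {(1, -1)} ∪ {q | ∃ r ∈ D, ∃ i : ℕ, i ≤ r ∧ q = (-(r : ℤ) + i, (i : ℤ))}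

/-- If an `n`-step walk with steps in `S_D` goes from `(0,0)` to `(i,j)`,
then `i - j ≡ 2n (mod ι)` where `ι = gcd(r+2, r ∈ D)`. -/
theorem tandem_walk_periodicity (D : Finset ℕ) (hD : D.Nonempty) (hD0 : D ≠ {0})
    (n : ℕ) (i j : ℤ) (s : Fin n → ℤ × ℤ)
    (hs : ∀ l, s l ∈ tandemSteps D)
    (hsum : ∑ l, s l = (i, j)) :
    i - j ≡ 2 * n [ZMOD (D.gcd (fun r => r + 2) : ℤ)] := by
  rw [Int.modEq_iff_dvd]
  have hi : i = ∑ l, (s l).1 := by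
    have := congrArg Prod.fst hsum; simpa [Prod.fst_sum] using this.symm
  have hj : j = ∑ l, (s l).2 := by
    have := congrArg Prod.snd hsum; simpa [Prod.snd_sum] using this.symm
  have heq : 2 * (n : ℤ) - (i - j) = ∑ l, (2 - ((s l).1 - (s l).2)) := by
    rw [hi, hj]
    rw [Finset.sum_sub_distrib, Finset.sum_sub_distrib, Finset.sum_const]
    simp [mul_comm]
  rw [heq]
  apply Finset.dvd_sum
  intro l _
  rcases hs l with h | ⟨r, hr, k, hk, hq⟩
  · simp only [Set.mem_singleton_iff] at h
    rw [h]; norm_num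
  · rw [hq]
    have : (2 : ℤ) - ((-(r : ℤ) + k) - k) = (r : ℤ) + 2 := by ring
    rw [this]
    exact Finset.gcd_dvd hr
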